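/- Let P be an n×n complex Hermitian matrix with exp(2πiP) = I, let G ∈ M_n(ℂ), and define 𝔼(G) = ∫₀¹ exp(2πisP)·G·exp(−2πisP) ds and Ω = 2πi·∫₀¹ ∫₀^{s₁} exp(2πis₂P)·(G − 𝔼(G))·exp(−2πis₂P) ds₂ ds₁. Then [Ω, P] = G − 𝔼(G). -/

import Mathlib

open Matrix MeasureTheory intervalIntegral
open scoped Matrix.Norms.L2Operator

set_option maxHeartbeats 1600000 in
/-- **Solution of the commutator equation in Schrieffer-Wolff theory.**  Let `P` be
Hermitian with `exp(2πiP) = I`, let `G` be any matrix, set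
`𝔼(G) = ∫₀¹ exp(2πisP)·G·exp(−2πisP) ds` and
`Ω = 2πi·∫₀¹∫₀^{s₁} exp(2πis₂P)·(G − 𝔼(G))·exp(−2πis₂P) ds₂ ds₁`.
Then `[Ω, P] = G − 𝔼(G)`. -/
theorem schrieffer_wolff_commutator_equation
    (n : ℕ) (P G : Matrix (Fin n) (Fin n) ℂ) (hP : P.IsHermitian)
    (hPexp : NormedSpace.exp ((((2 * Real.pi : ℝ) : ℂ) * Complex.I) • P) = 1)
    (EG : Matrix (Fin n) (Fin n) ℂ)
    (hEG : EG = ∫ s in (0:ℝ)..1,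
      NormedSpace.exp ((((2 * Real.pi * s : ℝ) : ℂ) * Complex.I) • P) * G *
        NormedSpace.exp ((-((2 * Real.pi * s : ℝ) : ℂ) * Complex.I) • P))
    (Ω : Matrix (Fin n) (Fin n) ℂ)
    (hΩ : Ω = ((((2 * Real.pi : ℝ) : ℂ) * Complex.I)) •
      ∫ s₁ in (0:ℝ)..1, ∫ s₂ in (0:ℝ)..s₁,
        NormedSpace.exp ((((2 * Real.pi * s₂ : ℝ) : ℂ) * Complex.I) • P) * (G - EG) *
          NormedSpace.exp ((-((2 * Real.pi * s₂ : ℝ) : ℂ) * Complex.I) • P)) :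
    Ω * P - P * Ω = G - EG := by
  set c : ℂ := (((2 * Real.pi : ℝ) : ℂ) * Complex.I) with hc
  set A : Matrix (Fin n) (Fin n) ℂ := c • P with hA
  set U : ℝ → Matrix (Fin n) (Fin n) ℂ := fun s => NormedSpace.exp ((s : ℂ) • A) with hU
  -- rewrite the exponentials appearing in the hypotheses
  have hexp : ∀ s : ℝ,
      NormedSpace.exp ((((2 * Real.pi * s : ℝ) : ℂ) * Complex.I) • P) = U s := by
    intro s
    have h : (((2 * Real.pi * s : ℝ) : ℂ) * Complex.I) = (s : ℂ) * c := by
      rw [hc]; push_cast; ring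
    show _ = NormedSpace.exp ((s : ℂ) • A)
    rw [hA, smul_smul, h]
  have hexpneg : ∀ s : ℝ,
      NormedSpace.exp ((-((2 * Real.pi * s : ℝ) : ℂ) * Complex.I) • P) = U (-s) := by
    intro s
    have h : (-((2 * Real.pi * s : ℝ) : ℂ) * Complex.I) = ((-s : ℝ) : ℂ) * c := by
      rw [hc]; push_cast; ring
    show _ = NormedSpace.exp (((-s : ℝ) : ℂ) • A)
    rw [hA, smul_smul, h]
  simp only [hexp, hexpneg] at hEG hΩ
  -- basic properties of U
  have hUd : ∀ s : ℝ, HasDerivAt U (U s * A) s := fun s => by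
    have h := (hasDerivAt_exp_smul_const (𝕂 := ℂ) A (s:ℂ)).scomp s Complex.ofRealCLM.hasDerivAt
    simp only [Complex.ofRealCLM_apply, Complex.ofReal_one, one_smul] at h
    exact h
  have hUd' : ∀ s : ℝ, HasDerivAt U (A * U s) s := fun s => by
    have h := (hasDerivAt_exp_smul_const' (𝕂 := ℂ) A (s:ℂ)).scomp s Complex.ofRealCLM.hasDerivAt
    simp only [Complex.ofRealCLM_apply, Complex.ofReal_one, one_smul] at h
    exact h
  have hUcont : Continuous U := by
    rw [continuous_iff_continuousAt]; exact fun s => (hUd s).continuousAt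
  have hUadd : ∀ s t : ℝ, U (s + t) = U s * U t := by
    intro s t
    have hcomm : Commute ((s:ℂ) • A) ((t:ℂ) • A) :=
      ((Commute.refl A).smul_left (s:ℂ)).smul_right (t:ℂ)
    have h : ((s + t : ℝ) : ℂ) • A = (s:ℂ) • A + (t:ℂ) • A := by push_cast; rw [add_smul]
    simp only [hU]
    rw [h, Matrix.exp_add_of_commute _ _ hcomm]
  have hUcomm : ∀ s t : ℝ, U s * U t = U t * U s := fun s t => by
    rw [← hUadd, ← hUadd, add_comm]
  have hU0 : U 0 = 1 := by simp [hU, NormedSpace.exp_zero]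
  have hU1 : U 1 = 1 := by
    show NormedSpace.exp (((1:ℝ):ℂ) • A) = 1
    rw [Complex.ofReal_one, one_smul]
    exact hPexp
  have hUneg1 : U (-1) = 1 := by
    have h := hUadd (-1) 1
    simp only [neg_add_cancel, hU0, hU1, mul_one] at h
    exact h.symm
  have hUinv : ∀ s : ℝ, U s * U (-s) = 1 := fun s => by
    rw [← hUadd, add_neg_cancel, hU0]
  have hUinv' : ∀ s : ℝ, U (-s) * U s = 1 := fun s => by
    rw [← hUadd, neg_add_cancel, hU0]
  -- commutation of A with U
  have hAU : ∀ s : ℝ, A * U s = U s * A := by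
    intro s
    have h : Commute A ((s:ℂ) • A) := (Commute.refl A).smul_right (s:ℂ)
    exact h.exp_right.eq
  -- g and its periodicity
  set g : ℝ → Matrix (Fin n) (Fin n) ℂ := fun s => U s * G * U (-s) with hg
  have hgcont : Continuous g :=
    (hUcont.mul continuous_const).mul (hUcont.comp continuous_neg)
  have hgper : Function.Periodic g 1 := by
    intro s
    simp only [hg]
    rw [hUadd s 1, hU1, mul_one, neg_add, hUadd (-s) (-1), hUneg1, mul_one]
  -- invariance of EG under conjugation
  have hconj : ∀ t : ℝ, U t * EG * U (-t) = EG := by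
    intro t
    have hgint : ∀ a b : ℝ, IntervalIntegrable g volume a b := fun a b =>
      hgcont.intervalIntegrable a b
    set L : Matrix (Fin n) (Fin n) ℂ →L[ℝ] Matrix (Fin n) (Fin n) ℂ :=
      ContinuousLinearMap.mulLeftRight ℝ _ (U t) (U (-t)) with hL
    have hLapp : ∀ x : Matrix (Fin n) (Fin n) ℂ, L x = U t * x * U (-t) := fun x =>
      ContinuousLinearMap.mulLeftRight_apply ℝ _ (U t) (U (-t)) x
    have h1 : U t * EG * U (-t) = L EG := (hLapp EG).symm
    rw [h1]
    conv_lhs => rw [hEG]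
    rw [← L.intervalIntegral_comp_comm (hgint 0 1)]
    have h2 : ∀ s : ℝ, L (g s) = g (s + t) := by
      intro s
      rw [hLapp]
      simp only [hg]
      rw [neg_add, hUadd s t, hUadd (-s) (-t)]
      simp only [← mul_assoc]
      rw [hUcomm t s]
    calc (∫ s in (0:ℝ)..1, L (g s)) = ∫ s in (0:ℝ)..1, g (s + t) :=
          intervalIntegral.integral_congr (fun s _ => h2 s)
      _ = ∫ s in (0:ℝ)+t..1+t, g s := intervalIntegral.integral_comp_add_right g t
      _ = ∫ s in t..t+1, g s := by rw [zero_add, add_comm 1 t]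
      _ = ∫ s in (0:ℝ)..0+1, g s := hgper.intervalIntegral_add_eq t 0
      _ = EG := by rw [zero_add, ← hEG]
  -- F and its integral over [0,1]
  set F : ℝ → Matrix (Fin n) (Fin n) ℂ := fun s => U s * (G - EG) * U (-s) with hF
  have hFcont : Continuous F :=
    (hUcont.mul continuous_const).mul (hUcont.comp continuous_neg)
  have hFeq : ∀ s : ℝ, F s = g s - EG := by
    intro s
    simp only [hF, hg]
    rw [mul_sub, sub_mul, hconj s]
  have hF0 : F 0 = G - EG := by simp [hF, hU0]
  have hFint0 : (∫ s in (0:ℝ)..1, F s) = 0 := by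
    rw [intervalIntegral.integral_congr (g := fun s => g s - EG) (fun s _ => hFeq s),
      intervalIntegral.integral_sub (hgcont.intervalIntegrable 0 1) intervalIntegrable_const,
      ← hEG, intervalIntegral.integral_const]
    simp
  -- derivative of F
  have hVd : ∀ s : ℝ, HasDerivAt (fun s : ℝ => U (-s)) (-(A * U (-s))) s := by
    intro s
    have h := (hUd' (-s)).scomp s (hasDerivAt_neg s)
    simp only [neg_one_smul] at h
    exact h
  have hFd : ∀ s : ℝ, HasDerivAt F (A * F s - F s * A) s := by
    intro s
    have h1 : HasDerivAt (fun s : ℝ => U s * (G - EG)) (U s * A * (G - EG)) s :=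
      (hUd s).mul_const _
    have h2 : HasDerivAt (fun s : ℝ => U s * (G - EG) * U (-s))
        (U s * A * (G - EG) * U (-s) + U s * (G - EG) * -(A * U (-s))) s := h1.mul (hVd s)
    convert h2 using 1
    simp only [hF]
    have e1 : A * (U s * (G - EG) * U (-s)) = U s * A * (G - EG) * U (-s) := by
      rw [← mul_assoc, ← mul_assoc, hAU s]
    have e2 : U s * (G - EG) * U (-s) * A = U s * (G - EG) * (A * U (-s)) := by
      rw [mul_assoc, ← hAU (-s)]
    rw [e1, e2, mul_neg, sub_eq_add_neg]
  have hFint : ∀ a b : ℝ, IntervalIntegrable F volume a b := fun a b =>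
    hFcont.intervalIntegrable a b
  -- the primitive H
  set H : ℝ → Matrix (Fin n) (Fin n) ℂ := fun s₁ => ∫ s₂ in (0:ℝ)..s₁, F s₂ with hH
  have hHcont : Continuous H := intervalIntegral.continuous_primitive hFint 0
  have hHA : ∀ s₁ : ℝ, H s₁ * A - A * H s₁ = (G - EG) - F s₁ := by
    intro s₁
    have hF'cont : Continuous fun s => A * F s - F s * A :=
      (continuous_const.mul hFcont).sub (hFcont.mul continuous_const)
    have ftc := intervalIntegral.integral_eq_sub_of_hasDerivAt
      (f := F) (f' := fun s => A * F s - F s * A)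
      (fun t _ => hFd t) (hF'cont.intervalIntegrable 0 s₁)
    have h1 : (∫ s in (0:ℝ)..s₁, A * F s) = A * H s₁ := by
      have h := (ContinuousLinearMap.mul ℝ (Matrix (Fin n) (Fin n) ℂ)
        A).intervalIntegral_comp_comm (hFint 0 s₁)
      simpa [hH] using h
    have h2 : (∫ s in (0:ℝ)..s₁, F s * A) = H s₁ * A := by
      have h := ((ContinuousLinearMap.mul ℝ (Matrix (Fin n) (Fin n) ℂ)).flip
        A).intervalIntegral_comp_comm (hFint 0 s₁)
      simpa [hH] using h
    rw [intervalIntegral.integral_sub (f := fun s => A * F s) (g := fun s => F s * A) ((continuous_const.mul hFcont).intervalIntegrable 0 s₁)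
      ((hFcont.mul continuous_const).intervalIntegrable 0 s₁), h1, h2, hF0] at ftc
    calc H s₁ * A - A * H s₁ = -(A * H s₁ - H s₁ * A) := by rw [neg_sub]
      _ = -(F s₁ - (G - EG)) := by rw [ftc]
      _ = (G - EG) - F s₁ := by rw [neg_sub]
  -- final computation
  have hHint : IntervalIntegrable H volume 0 1 := hHcont.intervalIntegrable 0 1
  set J : Matrix (Fin n) (Fin n) ℂ := ∫ s₁ in (0:ℝ)..1, H s₁ with hJ
  have j1 : (∫ s₁ in (0:ℝ)..1, H s₁ * A) = J * A := by
    have h := ((ContinuousLinearMap.mul ℝ (Matrix (Fin n) (Fin n) ℂ)).flip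
      A).intervalIntegral_comp_comm hHint
    simpa [hJ] using h
  have j2 : (∫ s₁ in (0:ℝ)..1, A * H s₁) = A * J := by
    have h := (ContinuousLinearMap.mul ℝ (Matrix (Fin n) (Fin n) ℂ)
      A).intervalIntegral_comp_comm hHint
    simpa [hJ] using h
  rw [hΩ]
  calc (c • J) * P - P * (c • J) = c • (J * P) - c • (P * J) := by
        rw [smul_mul_assoc, mul_smul_comm]
    _ = J * (c • P) - (c • P) * J := by rw [mul_smul_comm, smul_mul_assoc]
    _ = J * A - A * J := by rw [← hA]
    _ = (∫ s₁ in (0:ℝ)..1, H s₁ * A) - ∫ s₁ in (0:ℝ)..1, A * H s₁ := by rw [j1, j2]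
    _ = ∫ s₁ in (0:ℝ)..1, (H s₁ * A - A * H s₁) := by
        rw [intervalIntegral.integral_sub (f := fun s₁ => H s₁ * A) (g := fun s₁ => A * H s₁)
          ((hHcont.mul continuous_const).intervalIntegrable 0 1)
          ((continuous_const.mul hHcont).intervalIntegrable 0 1)]
    _ = ∫ s₁ in (0:ℝ)..1, ((G - EG) - F s₁) := by
        exact intervalIntegral.integral_congr (fun s _ => hHA s)
    _ = (∫ s₁ in (0:ℝ)..1, (G - EG)) - ∫ s₁ in (0:ℝ)..1, F s₁ := by
        rw [intervalIntegral.integral_sub intervalIntegrable_const (hFint 0 1)]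
    _ = G - EG := by rw [hFint0, intervalIntegral.integral_const]; simp
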